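/- (Correctness of the dynamic program for tree adversaries.) In the setting of the restricted decision tree above (each coordinate used at most once in the tree), define adv[i, r] as the minimum over all x̄ differing from x in at most r coordinates among those appearing in the subtree rooted at i, of the smoothed prediction of subtree i at x̄. Then adv satisfies: adv[leaf, r] = leaf output, and adv[i, r] = min( min_{0 ≤ r̄ ≤ r} { w_R · adv[right[i], r̄] + w_L · adv[left[i], r − r̄] }, min_{0 ≤ r̄ ≤ r−1} { w_L · adv[right[i], r̄] + w_R · adv[left[i], r − 1 − r̄] } ), where w_R = α^{[x_{idx[i]}=1]} β^{[x_{idx[i]}=0]} and w_L = α^{[x_{idx[i]}=0]} β^{[x_{idx[i]}=1]}; moreover adv[root, r] equals min_{‖x̄ − x‖₀ ≤ r} E[f(φ(x̄))]. -/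
import Mathlib


/-- Binary decision trees over `{0,1}^d` with real-valued leaf outputs. -/
inductive BTree (d : ℕ) : Type
  | leaf (val : ℝ) : BTree d
  | node (idx : Fin d) (left right : BTree d) : BTree d

namespace BTree

/-- The tree output on input `z`: route right when the split
coordinate equals `1` (`true`). -/
def eval {d : ℕ} : BTree d → (Fin d → Bool) → ℝ
  | leaf v, _ => v
  | node i l r, z => if z i then eval r z else eval l z

/-- Multiset of split coordinates used in the tree. -/
def indices {d : ℕ} : BTree d → Multiset (Fin d)
  | leaf _ => 0
  | node i l r => i ::ₘ (indices l + indices r)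

/-- The smoothed prediction recursion of Eq. (8). -/
def pred {d : ℕ} (α β : ℝ) (x : Fin d → Bool) : BTree d → ℝ
  | leaf v => v
  | node i l r =>
      (if x i then α else β) * pred α β x r
        + (if x i then β else α) * pred α β x l

end BTree

/-- Probability mass of the binary discrete randomization. -/
noncomputable def flipProb {d : ℕ} (α β : ℝ) (x z : Fin d → Bool) : ℝ :=
  ∏ i, (if z i = x i then α else β)

/-- `adv[t, r]`: the minimum smoothed prediction of the subtree `t` over
adversaries `x̄` that differ from `x` in at most `r` coordinates, all of
which appear in `t`. -/
noncomputable def advSem {d : ℕ} (α β : ℝ) (x : Fin d → Bool)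
    (t : BTree d) (rr : ℕ) : ℝ :=
  sInf {s : ℝ | ∃ xb : Fin d → Bool,
    (Finset.univ.filter fun i => xb i ≠ x i).card ≤ rr ∧
    (∀ i, i ∉ t.indices → xb i = x i) ∧
    s = BTree.pred α β xb t}

open Finset

variable {d : ℕ}

lemma pred_congr (α β : ℝ) (xb xc : Fin d → Bool) :
    ∀ t : BTree d, (∀ j ∈ t.indices, xb j = xc j) →
      BTree.pred α β xb t = BTree.pred α β xc t
  | BTree.leaf v, _ => rfl
  | BTree.node i l r, h => by
      have hi : xb i = xc i := h i (by simp [BTree.indices])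
      have hl := pred_congr α β xb xc l (fun j hj => h j (by simp [BTree.indices, hj]))
      have hr := pred_congr α β xb xc r (fun j hj => h j (by simp [BTree.indices, hj]))
      simp only [BTree.pred, hi, hl, hr]

lemma eval_update (i : Fin d) (b : Bool) :
    ∀ t : BTree d, i ∉ t.indices → ∀ z, BTree.eval t (Function.update z i b) = BTree.eval t z
  | BTree.leaf v, _, _ => rfl
  | BTree.node j l r, h, z => by
      have hij : i ≠ j := by
        intro e; exact h (by simp [BTree.indices, e])
      have hl := eval_update i b l (fun hm => h (by simp [BTree.indices, hm])) z
      have hr := eval_update i b r (fun hm => h (by simp [BTree.indices, hm])) z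
      simp only [BTree.eval, Function.update_of_ne hij.symm, hl, hr]

lemma sum_flipProb (α : ℝ) (xb : Fin d → Bool) :
    ∑ z : Fin d → Bool, flipProb α (1 - α) xb z = 1 := by
  have := (Fintype.prod_sum (fun (i : Fin d) (c : Bool) => if c = xb i then α else 1 - α)).symm
  simp only [flipProb]
  rw [this]
  rw [Finset.prod_congr rfl fun i _ => show (∑ c : Bool, if c = xb i then α else 1 - α) = 1 by
    cases h : xb i <;> simp [Fintype.sum_bool, h]]
  simp

lemma flipProb_factor (α β : ℝ) (xb z : Fin d → Bool) (i : Fin d) :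
    flipProb α β xb z
      = (if z i = xb i then α else β)
          * ∏ j ∈ univ.erase i, (if z j = xb j then α else β) :=
  (Finset.mul_prod_erase univ _ (mem_univ i)).symm

lemma prodErase_update (α β : ℝ) (xb z : Fin d → Bool) (i : Fin d) (b : Bool) :
    (∏ j ∈ univ.erase i, (if Function.update z i b j = xb j then α else β))
      = ∏ j ∈ univ.erase i, (if z j = xb j then α else β) := by
  refine Finset.prod_congr rfl fun j hj => ?_
  rw [Function.update_of_ne (Finset.ne_of_mem_erase hj)]

lemma sum_flip_split (α : ℝ) (xb : Fin d → Bool) (i : Fin d) (b : Bool)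
    (g : (Fin d → Bool) → ℝ) (hg : ∀ z c, g (Function.update z i c) = g z) :
    ∑ z ∈ univ.filter (fun z => z i = b), flipProb α (1 - α) xb z * g z
      = (if b = xb i then α else (1 - α)) * ∑ z : Fin d → Bool, flipProb α (1 - α) xb z * g z := by
  set β := (1 : ℝ) - α with hβ
  set P : (Fin d → Bool) → ℝ := fun z => ∏ j ∈ univ.erase i, (if z j = xb j then α else β) with hP
  set A : Bool → ℝ := fun c => ∑ z ∈ univ.filter (fun z => z i = c), P z * g z with hA
  have hstep : ∀ c : Bool,
      ∑ z ∈ univ.filter (fun z => z i = c), flipProb α β xb z * g z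
        = (if c = xb i then α else β) * A c := by
    intro c
    rw [hA, Finset.mul_sum]
    refine Finset.sum_congr rfl fun z hz => ?_
    have hzc : z i = c := (Finset.mem_filter.mp hz).2
    rw [flipProb_factor α β xb z i, hzc]
    ring
  have hAeq : A true = A false := by
    refine Finset.sum_nbij' (fun z => Function.update z i false)
      (fun z => Function.update z i true) ?_ ?_ ?_ ?_ ?_
    · intro z hz; simp [Function.update_self]
    · intro z hz; simp [Function.update_self]
    · intro z hz
      have : z i = true := by simpa using hz
      funext j
      rcases eq_or_ne j i with rfl | hj
      · simp [this]
      · simp [Function.update_of_ne hj]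
    · intro z hz
      have : z i = false := by simpa using hz
      funext j
      rcases eq_or_ne j i with rfl | hj
      · simp [this]
      · simp [Function.update_of_ne hj]
    · intro z hz
      rw [hP]
      simp only
      rw [prodErase_update, hg]
  have htot : ∑ z : Fin d → Bool, flipProb α β xb z * g z
      = (if true = xb i then α else β) * A true + (if false = xb i then α else β) * A false := by
    rw [← hstep true, ← hstep false,
      ← Finset.sum_filter_add_sum_filter_not univ (fun z => z i = true)]
    congr 1
    refine Finset.sum_congr ?_ fun _ _ => rfl
    ext z; simp
  rw [htot, hstep]
  have hone : (if true = xb i then α else β) + (if false = xb i then α else β) = 1 := by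
    cases h : xb i <;> simp [h, hβ]
  cases b <;> cases h : xb i <;>
    simp only [hAeq, h, if_pos, if_neg, Bool.true_eq_false, Bool.false_eq_true] <;> ring_nf <;>
    simp [hAeq] <;> ring

lemma sum_eq_pred (α : ℝ) (x : Fin d → Bool) :
    ∀ t : BTree d, t.indices.Nodup → ∀ xb : Fin d → Bool,
      (∑ z : Fin d → Bool, flipProb α (1 - α) xb z * BTree.eval t z)
        = BTree.pred α (1 - α) xb t
  | BTree.leaf v, _, xb => by
      simp only [BTree.eval, BTree.pred, ← Finset.sum_mul, sum_flipProb, one_mul]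
  | BTree.node i l r, h, xb => by
      have h' := Multiset.nodup_cons.mp h
      have hi : i ∉ l.indices ∧ i ∉ r.indices := by
        constructor <;> intro hm <;> exact h'.1 (by simp [hm])
      have hadd := Multiset.nodup_add.mp h'.2
      have hl := sum_eq_pred α x l hadd.1 xb
      have hr := sum_eq_pred α x r hadd.2.1 xb
      have split := Finset.sum_filter_add_sum_filter_not Finset.univ
        (fun z : Fin d → Bool => z i = true)
        (fun z => flipProb α (1 - α) xb z * BTree.eval (BTree.node i l r) z)
      have e1 : ∑ z ∈ Finset.univ.filter (fun z : Fin d → Bool => z i = true),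
          flipProb α (1 - α) xb z * BTree.eval (BTree.node i l r) z
          = (if true = xb i then α else 1 - α)
              * ∑ z : Fin d → Bool, flipProb α (1 - α) xb z * BTree.eval r z := by
        rw [← sum_flip_split α xb i true (BTree.eval r) (fun z c => eval_update i c r hi.2 z)]
        refine Finset.sum_congr rfl fun z hz => ?_
        have : z i = true := (Finset.mem_filter.mp hz).2
        simp [BTree.eval, this]
      have e2 : ∑ z ∈ Finset.univ.filter (fun z : Fin d → Bool => ¬ z i = true),
          flipProb α (1 - α) xb z * BTree.eval (BTree.node i l r) z
          = (if false = xb i then α else 1 - α)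
              * ∑ z : Fin d → Bool, flipProb α (1 - α) xb z * BTree.eval l z := by
        rw [← sum_flip_split α xb i false (BTree.eval l) (fun z c => eval_update i c l hi.1 z)]
        refine Finset.sum_congr ?_ fun z hz => ?_
        · ext z; simp
        · have : z i = false := by simpa using (Finset.mem_filter.mp hz).2
          simp [BTree.eval, this]
      rw [← split, e1, e2, hl, hr]
      simp only [BTree.pred]
      cases h : xb i <;> simp [h]


def advSet (α β : ℝ) (x : Fin d → Bool) (t : BTree d) (rr : ℕ) : Set ℝ :=
  {s : ℝ | ∃ xb : Fin d → Bool,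
    (Finset.univ.filter fun i => xb i ≠ x i).card ≤ rr ∧
    (∀ i, i ∉ t.indices → xb i = x i) ∧
    s = BTree.pred α β xb t}

lemma advSem_eq (α β : ℝ) (x : Fin d → Bool) (t : BTree d) (rr : ℕ) :
    advSem α β x t rr = sInf (advSet α β x t rr) := rfl

lemma advSet_finite (α β : ℝ) (x : Fin d → Bool) (t : BTree d) (rr : ℕ) :
    (advSet α β x t rr).Finite := by
  refine Set.Finite.subset (Set.finite_range (fun xb : Fin d → Bool => BTree.pred α β xb t)) ?_
  rintro s ⟨xb, -, -, rfl⟩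
  exact ⟨xb, rfl⟩

lemma advSet_nonempty (α β : ℝ) (x : Fin d → Bool) (t : BTree d) (rr : ℕ) :
    (advSet α β x t rr).Nonempty :=
  ⟨BTree.pred α β x t, x, by simp, fun _ _ => rfl, rfl⟩

lemma advSem_mem (α β : ℝ) (x : Fin d → Bool) (t : BTree d) (rr : ℕ) :
    advSem α β x t rr ∈ advSet α β x t rr :=
  Set.Nonempty.csInf_mem (advSet_nonempty α β x t rr) (advSet_finite α β x t rr)

lemma advSem_le (α β : ℝ) (x : Fin d → Bool) (t : BTree d) (rr : ℕ)
    (xb : Fin d → Bool)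
    (h1 : (Finset.univ.filter fun i => xb i ≠ x i).card ≤ rr)
    (h2 : ∀ i, i ∉ t.indices → xb i = x i) :
    advSem α β x t rr ≤ BTree.pred α β xb t :=
  csInf_le (advSet_finite α β x t rr).bddBelow ⟨xb, h1, h2, rfl⟩

lemma part1 (α : ℝ) (x : Fin d → Bool) (v : ℝ) (rr : ℕ) :
    advSem α (1 - α) x (BTree.leaf v) rr = v := by
  rw [advSem_eq]
  have : advSet α (1 - α) x (BTree.leaf v) rr = {v} := by
    ext s
    constructor
    · rintro ⟨xb, -, -, rfl⟩; rfl
    · rintro rfl; exact ⟨x, by simp, fun _ _ => rfl, rfl⟩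
  rw [this, csInf_singleton]

lemma part3 (α : ℝ) (x : Fin d → Bool) (t : BTree d) (rr : ℕ) (hnd : t.indices.Nodup) :
    advSem α (1 - α) x t rr
      = sInf {s : ℝ | ∃ xb : Fin d → Bool,
          (Finset.univ.filter fun i => xb i ≠ x i).card ≤ rr ∧
          s = ∑ z : Fin d → Bool,
                flipProb α (1 - α) xb z * BTree.eval t z} := by
  rw [advSem_eq]
  congr 1
  ext s
  constructor
  · rintro ⟨xb, h1, h2, rfl⟩
    exact ⟨xb, h1, (sum_eq_pred α x t hnd xb).symm⟩
  · rintro ⟨xb, h1, rfl⟩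
    classical
    refine ⟨fun j => if j ∈ t.indices then xb j else x j, ?_, fun j hj => if_neg hj, ?_⟩
    · refine le_trans (Finset.card_le_card ?_) h1
      intro j hj
      simp only [Finset.mem_filter, Finset.mem_univ, true_and] at hj ⊢
      intro h
      apply hj
      by_cases hm : j ∈ t.indices
      · simpa [hm] using h
      · simp [hm]
    · rw [sum_eq_pred α x t hnd xb]
      exact pred_congr α (1 - α) xb _ t (fun j hj => by simp [hj]) |>.symm |>.symm

lemma part2 (α : ℝ) (hα : α ∈ Set.Ioo (0 : ℝ) 1) (x : Fin d → Bool) (i : Fin d)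
    (l r : BTree d) (rr : ℕ) (hnd : (BTree.node i l r).indices.Nodup) :
    advSem α (1 - α) x (BTree.node i l r) rr
      = sInf
          ({s : ℝ | ∃ k ≤ rr,
              s = (if x i then α else 1 - α) * advSem α (1 - α) x r k
                + (if x i then 1 - α else α) * advSem α (1 - α) x l (rr - k)}
            ∪ {s : ℝ | ∃ k, k + 1 ≤ rr ∧
              s = (if x i then 1 - α else α) * advSem α (1 - α) x r k
                + (if x i then α else 1 - α)
                    * advSem α (1 - α) x l (rr - 1 - k)}) := by
  classical
  obtain ⟨h0, h1'⟩ := hα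
  set β : ℝ := 1 - α with hβdef
  have hβ : 0 < β := by simp only [hβdef]; linarith
  have hcons := Multiset.nodup_cons.mp hnd
  have hil : i ∉ l.indices := fun hm => hcons.1 (by simp [hm])
  have hir : i ∉ r.indices := fun hm => hcons.1 (by simp [hm])
  have hadd := Multiset.nodup_add.mp hcons.2
  have hdisj : ∀ j, j ∈ l.indices → j ∉ r.indices :=
    fun j hj => Multiset.disjoint_left.mp hadd.2.2 hj
  set U1 : Set ℝ := {s : ℝ | ∃ k ≤ rr,
      s = (if x i then α else β) * advSem α β x r k
        + (if x i then β else α) * advSem α β x l (rr - k)} with hU1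
  set U2 : Set ℝ := {s : ℝ | ∃ k, k + 1 ≤ rr ∧
      s = (if x i then β else α) * advSem α β x r k
        + (if x i then α else β) * advSem α β x l (rr - 1 - k)} with hU2
  have hU1fin : U1.Finite := by
    refine Set.Finite.subset (Set.Finite.image
      (fun k => (if x i then α else β) * advSem α β x r k
        + (if x i then β else α) * advSem α β x l (rr - k)) (Set.finite_Iic rr)) ?_
    rintro s ⟨k, hk, rfl⟩; exact ⟨k, hk, rfl⟩
  have hU2fin : U2.Finite := by
    refine Set.Finite.subset (Set.Finite.image
      (fun k => (if x i then β else α) * advSem α β x r k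
        + (if x i then α else β) * advSem α β x l (rr - 1 - k)) (Set.finite_Iic rr)) ?_
    rintro s ⟨k, hk, rfl⟩; exact ⟨k, le_trans (Nat.le_succ k) hk, rfl⟩
  have hUfin : (U1 ∪ U2).Finite := hU1fin.union hU2fin
  have hU1ne : (U1 ∪ U2).Nonempty := ⟨_, Or.inl ⟨0, Nat.zero_le _, rfl⟩⟩
  have wnonneg : (0:ℝ) ≤ (if x i then α else β) ∧ (0:ℝ) ≤ (if x i then β else α) := by
    constructor <;> cases x i <;> simp <;> linarith
  rw [advSem_eq]
  apply le_antisymm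
  · -- every element of U1 ∪ U2 lies in the adversarial set
    refine csInf_le_csInf (advSet_finite α β x _ rr).bddBelow hU1ne ?_
    rintro s (⟨k, hk, rfl⟩ | ⟨k, hk, rfl⟩)
    · obtain ⟨xbr, hr1, hr2, hr3⟩ := advSem_mem α β x r k
      obtain ⟨xbl, hl1, hl2, hl3⟩ := advSem_mem α β x l (rr - k)
      set xb : Fin d → Bool :=
        fun j => if j ∈ r.indices then xbr j else if j ∈ l.indices then xbl j else x j with hxb
      have hxbi : xb i = x i := by simp [hxb, hir, hil]
      have hpr : BTree.pred α β xb r = BTree.pred α β xbr r :=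
        pred_congr α β xb xbr r (fun j hj => by simp [hxb, hj])
      have hpl : BTree.pred α β xb l = BTree.pred α β xbl l :=
        pred_congr α β xb xbl l (fun j hj => by simp [hxb, hdisj j hj, hj])
      refine ⟨xb, ?_, ?_, ?_⟩
      · have hsub : (Finset.univ.filter fun j => xb j ≠ x j)
            ⊆ (Finset.univ.filter fun j => xbr j ≠ x j)
              ∪ (Finset.univ.filter fun j => xbl j ≠ x j) := by
          intro j hj
          simp only [Finset.mem_filter, Finset.mem_univ, true_and, Finset.mem_union,
            hxb] at hj ⊢
          by_cases h1 : j ∈ r.indices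
          · left; simpa [h1] using hj
          · by_cases h2 : j ∈ l.indices
            · right; simpa [h1, h2] using hj
            · simp [h1, h2] at hj
        calc (Finset.univ.filter fun j => xb j ≠ x j).card
            ≤ _ := Finset.card_le_card hsub
          _ ≤ _ := Finset.card_union_le _ _
          _ ≤ k + (rr - k) := Nat.add_le_add hr1 hl1
          _ = rr := by omega
      · intro j hj
        simp only [BTree.indices, Multiset.mem_cons, Multiset.mem_add, not_or] at hj
        simp [hxb, hj.2.1, hj.2.2]
      · show _ = (if xb i then α else β) * BTree.pred α β xb r
            + (if xb i then β else α) * BTree.pred α β xb l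
        rw [hxbi, hpr, hpl, hr3, hl3]
    · obtain ⟨xbr, hr1, hr2, hr3⟩ := advSem_mem α β x r k
      obtain ⟨xbl, hl1, hl2, hl3⟩ := advSem_mem α β x l (rr - 1 - k)
      set xb : Fin d → Bool :=
        fun j => if j ∈ r.indices then xbr j else if j ∈ l.indices then xbl j
          else if j = i then !(x i) else x j with hxb
      have hxbi : xb i = !(x i) := by simp [hxb, hir, hil]
      have hpr : BTree.pred α β xb r = BTree.pred α β xbr r :=
        pred_congr α β xb xbr r (fun j hj => by simp [hxb, hj])
      have hpl : BTree.pred α β xb l = BTree.pred α β xbl l :=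
        pred_congr α β xb xbl l (fun j hj => by simp [hxb, hdisj j hj, hj])
      refine ⟨xb, ?_, ?_, ?_⟩
      · have hsub : (Finset.univ.filter fun j => xb j ≠ x j)
            ⊆ ((Finset.univ.filter fun j => xbr j ≠ x j)
              ∪ (Finset.univ.filter fun j => xbl j ≠ x j)) ∪ {i} := by
          intro j hj
          simp only [Finset.mem_filter, Finset.mem_univ, true_and, Finset.mem_union,
            Finset.mem_singleton, hxb] at hj ⊢
          by_cases h1 : j ∈ r.indices
          · left; left; simpa [h1] using hj
          · by_cases h2 : j ∈ l.indices
            · left; right; simpa [h1, h2] using hj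
            · by_cases h3 : j = i
              · right; exact h3
              · simp [h1, h2, h3] at hj
        calc (Finset.univ.filter fun j => xb j ≠ x j).card
            ≤ _ := Finset.card_le_card hsub
          _ ≤ _ := Finset.card_union_le _ _
          _ ≤ (k + (rr - 1 - k)) + 1 := by
              refine Nat.add_le_add (le_trans (Finset.card_union_le _ _)
                (Nat.add_le_add hr1 hl1)) (le_of_eq (Finset.card_singleton i))
          _ ≤ rr := by omega
      · intro j hj
        simp only [BTree.indices, Multiset.mem_cons, Multiset.mem_add, not_or] at hj
        simp [hxb, hj.2.1, hj.2.2, hj.1]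
      · show _ = (if xb i then α else β) * BTree.pred α β xb r
            + (if xb i then β else α) * BTree.pred α β xb l
        rw [hxbi, hpr, hpl, hr3, hl3]
        cases x i <;> simp
  · -- sInf (U1 ∪ U2) is below every adversarial value
    refine le_csInf (advSet_nonempty α β x _ rr) ?_
    rintro s ⟨xb, hc, hout, rfl⟩
    set xbr : Fin d → Bool := fun j => if j ∈ r.indices then xb j else x j with hxbr
    set xbl : Fin d → Bool := fun j => if j ∈ l.indices then xb j else x j with hxbl
    have hDrdef : (Finset.univ.filter fun j => xbr j ≠ x j)
        = Finset.univ.filter fun j => xbr j ≠ x j := rfl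
    set Dr := Finset.univ.filter (fun j => xbr j ≠ x j) with hDr
    set Dl := Finset.univ.filter (fun j => xbl j ≠ x j) with hDl
    have hDrsub : Dr ⊆ Finset.univ.filter (fun j => xb j ≠ x j) := by
      intro j hj
      simp only [hDr, Finset.mem_filter, Finset.mem_univ, true_and, hxbr] at hj ⊢
      by_cases h1 : j ∈ r.indices <;> simp [h1] at hj ⊢; exact hj
    have hDlsub : Dl ⊆ Finset.univ.filter (fun j => xb j ≠ x j) := by
      intro j hj
      simp only [hDl, Finset.mem_filter, Finset.mem_univ, true_and, hxbl] at hj ⊢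
      by_cases h1 : j ∈ l.indices <;> simp [h1] at hj ⊢; exact hj
    have hDrR : ∀ j ∈ Dr, j ∈ r.indices := by
      intro j hj
      simp only [hDr, Finset.mem_filter, hxbr] at hj
      by_contra h1; simp [h1] at hj
    have hDlL : ∀ j ∈ Dl, j ∈ l.indices := by
      intro j hj
      simp only [hDl, Finset.mem_filter, hxbl] at hj
      by_contra h1; simp [h1] at hj
    have hdisjD : Disjoint Dr Dl := by
      rw [Finset.disjoint_left]
      intro j hjr hjl
      exact hdisj j (hDlL j hjl) (hDrR j hjr)
    have hpredr : BTree.pred α β xb r = BTree.pred α β xbr r :=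
      pred_congr α β xb xbr r (fun j hj => by simp [hxbr, hj])
    have hpredl : BTree.pred α β xb l = BTree.pred α β xbl l :=
      pred_congr α β xb xbl l (fun j hj => by simp [hxbl, hj])
    have hinotr : i ∉ Dr := fun h => hir (hDrR i h)
    have hinotl : i ∉ Dl := fun h => hil (hDlL i h)
    have hcard_un : Dr.card + Dl.card = (Dr ∪ Dl).card :=
      (Finset.card_union_of_disjoint hdisjD).symm
    have houtr : ∀ j, j ∉ r.indices → xbr j = x j := fun j hj => by simp [hxbr, hj]
    have houtl : ∀ j, j ∉ l.indices → xbl j = x j := fun j hj => by simp [hxbl, hj]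
    by_cases hxi : xb i = x i
    · have hcards : Dr.card + Dl.card ≤ rr := by
        rw [hcard_un]
        exact le_trans (Finset.card_le_card (Finset.union_subset hDrsub hDlsub)) hc
      have hr' : advSem α β x r Dr.card ≤ BTree.pred α β xbr r :=
        advSem_le α β x r Dr.card xbr (le_of_eq (congrArg Finset.card hDr.symm)) houtr
      have hl' : advSem α β x l (rr - Dr.card) ≤ BTree.pred α β xbl l :=
        advSem_le α β x l (rr - Dr.card) xbl
          (by rw [show (Finset.univ.filter fun j => xbl j ≠ x j) = Dl from hDl.symm]; omega)
          houtl
      have hmem : (if x i then α else β) * advSem α β x r Dr.card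
          + (if x i then β else α) * advSem α β x l (rr - Dr.card) ∈ U1 ∪ U2 :=
        Or.inl ⟨Dr.card, by omega, rfl⟩
      refine le_trans (csInf_le hUfin.bddBelow hmem) ?_
      show _ ≤ (if xb i then α else β) * BTree.pred α β xb r
          + (if xb i then β else α) * BTree.pred α β xb l
      rw [hxi, hpredr, hpredl]
      exact add_le_add (mul_le_mul_of_nonneg_left hr' wnonneg.1)
        (mul_le_mul_of_nonneg_left hl' wnonneg.2)
    · have hiD : i ∈ Finset.univ.filter (fun j => xb j ≠ x j) := by
        simp [hxi]
      have hsub3 : Dr ∪ Dl ∪ {i} ⊆ Finset.univ.filter (fun j => xb j ≠ x j) := by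
        refine Finset.union_subset (Finset.union_subset hDrsub hDlsub) ?_
        simpa using hiD
      have hdisj3 : Disjoint (Dr ∪ Dl) ({i} : Finset (Fin d)) := by
        rw [Finset.disjoint_right]
        intro j hj
        simp only [Finset.mem_singleton] at hj
        subst hj
        simp [hinotr, hinotl]
      have hcards : Dr.card + Dl.card + 1 ≤ rr := by
        have := Finset.card_le_card hsub3
        rw [Finset.card_union_of_disjoint hdisj3, ← hcard_un, Finset.card_singleton] at this
        omega
      have hr' : advSem α β x r Dr.card ≤ BTree.pred α β xbr r :=
        advSem_le α β x r Dr.card xbr (le_of_eq (congrArg Finset.card hDr.symm)) houtr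
      have hl' : advSem α β x l (rr - 1 - Dr.card) ≤ BTree.pred α β xbl l :=
        advSem_le α β x l (rr - 1 - Dr.card) xbl
          (by rw [show (Finset.univ.filter fun j => xbl j ≠ x j) = Dl from hDl.symm]; omega)
          houtl
      have hmem : (if x i then β else α) * advSem α β x r Dr.card
          + (if x i then α else β) * advSem α β x l (rr - 1 - Dr.card) ∈ U1 ∪ U2 :=
        Or.inr ⟨Dr.card, by omega, rfl⟩
      refine le_trans (csInf_le hUfin.bddBelow hmem) ?_
      have hxbi : xb i = !(x i) := by
        cases h : x i <;> cases h' : xb i <;> simp_all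
      show _ ≤ (if xb i then α else β) * BTree.pred α β xb r
          + (if xb i then β else α) * BTree.pred α β xb l
      rw [hxbi, hpredr, hpredl]
      have e1 : (if (!x i) = true then α else β) = (if x i then β else α) := by
        cases x i <;> simp
      have e2 : (if (!x i) = true then β else α) = (if x i then α else β) := by
        cases x i <;> simp
      rw [e1, e2]
      refine add_le_add (mul_le_mul_of_nonneg_left hr' ?_)
        (mul_le_mul_of_nonneg_left hl' ?_) <;> cases x i <;> simp <;> linarith

/-- Correctness of the dynamic program (Algorithm 3): `adv` satisfies the
leaf and node recursions (the two inner minima correspond to not perturbing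
/ perturbing the split coordinate of the node, the latter swapping the
routing weights and consuming one budget unit), and at the root it computes
`min_{‖x̄ − x‖₀ ≤ r} E[f(φ(x̄))]`. -/
theorem stmt_17 (d : ℕ) (α : ℝ) (hα : α ∈ Set.Ioo (0 : ℝ) 1)
    (x : Fin d → Bool) :
    (∀ (v : ℝ) (rr : ℕ), advSem α (1 - α) x (BTree.leaf v) rr = v)
    ∧ (∀ (i : Fin d) (l r : BTree d) (rr : ℕ),
        (BTree.node i l r).indices.Nodup →
        advSem α (1 - α) x (BTree.node i l r) rr
          = sInf
              ({s : ℝ | ∃ k ≤ rr,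
                  s = (if x i then α else 1 - α) * advSem α (1 - α) x r k
                    + (if x i then 1 - α else α) * advSem α (1 - α) x l (rr - k)}
                ∪ {s : ℝ | ∃ k, k + 1 ≤ rr ∧
                  s = (if x i then 1 - α else α) * advSem α (1 - α) x r k
                    + (if x i then α else 1 - α)
                        * advSem α (1 - α) x l (rr - 1 - k)}))
    ∧ (∀ (t : BTree d) (rr : ℕ), t.indices.Nodup →
        advSem α (1 - α) x t rr
          = sInf {s : ℝ | ∃ xb : Fin d → Bool,
              (Finset.univ.filter fun i => xb i ≠ x i).card ≤ rr ∧
              s = ∑ z : Fin d → Bool,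
                    flipProb α (1 - α) xb z * BTree.eval t z}) := by
  exact ⟨fun v rr => part1 α x v rr,
    fun i l r rr h => part2 α hα x i l r rr h,
    fun t rr h => part3 α x t rr h⟩
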